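/- Let D be the weighted ADF over V = [0,1] with flat information ordering whose acceptance conditions are given by propositional formulas φ_s containing no constants other than 0 or 1, evaluated by the fuzzy evaluation (C_s(w) = ŵ(φ_s)), and let D' be its classical version: the weighted ADF over V' = {0, 1} with flat information ordering and the same formulas, where evaluation over {0, 1} is the two-valued classical one identifying 1 with true and 0 with false. Let v be a partial interpretation assigning only values in {0, 1, u}, and let s ∈ S. If Γ_{D'}(v)(s) = u, then Γ_D(v)(s) = u. -/

import Mathlib

/-- Propositional formulas over a set `S` of atoms, with real constants and the
connectives `∧`, `∨`, `¬`. -/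
inductive Fml (S : Type) where
  | atom : S → Fml S
  | const : ℝ → Fml S
  | conj : Fml S → Fml S → Fml S
  | disj : Fml S → Fml S → Fml S
  | neg : Fml S → Fml S

/-- Fuzzy evaluation of a formula under a real-valued assignment of the atoms:
`∧` is min, `∨` is max, `¬` is `1 - ·`, constants evaluate to themselves. -/
def feval {S : Type} (w : S → ℝ) : Fml S → ℝ
  | .atom a => w a
  | .const c => c
  | .conj φ ψ => min (feval w φ) (feval w ψ)
  | .disj φ ψ => max (feval w φ) (feval w ψ)
  | .neg φ => 1 - feval w φ

open scoped Classical in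
/-- Classical two-valued evaluation of a formula under a Boolean assignment of
the atoms (the constant `1` is identified with true, `0` with false). -/
noncomputable def ceval {S : Type} (v : S → Bool) : Fml S → Bool
  | .atom a => v a
  | .const c => if 1 ≤ c then true else false
  | .conj φ ψ => ceval v φ && ceval v ψ
  | .disj φ ψ => ceval v φ || ceval v ψ
  | .neg φ => ! ceval v φ

/-- A formula is constant-free if it contains no constants. -/
def ConstFree {S : Type} : Fml S → Prop
  | .atom _ => True
  | .const _ => False
  | .conj φ ψ => ConstFree φ ∧ ConstFree ψ
  | .disj φ ψ => ConstFree φ ∧ ConstFree ψ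
  | .neg φ => ConstFree φ

/-- Constants occurring in the formula are only `0` or `1`. -/
def ConstZeroOne {S : Type} : Fml S → Prop
  | .atom _ => True
  | .const c => c = 0 ∨ c = 1
  | .conj φ ψ => ConstZeroOne φ ∧ ConstZeroOne ψ
  | .disj φ ψ => ConstZeroOne φ ∧ ConstZeroOne ψ
  | .neg φ => ConstZeroOne φ

/-- Completions, under the flat information ordering on `[0,1] ∪ {u}`
(with `none` playing the role of `u`), of a partial interpretation `v`:
total interpretations into `[0,1]` agreeing with `v` wherever `v` is defined. -/
def FuzzyCompl {S : Type} (v : S → Option ℝ) (w : S → ℝ) : Prop :=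
  (∀ s, w s ∈ Set.Icc (0:ℝ) 1) ∧ ∀ s, ∀ y : ℝ, v s = some y → w s = y

/-- Completions, under the flat information ordering on `{0,1} ∪ {u}`, of a
partial interpretation `v` whose defined values lie in `{0,1}`: total Boolean
interpretations agreeing with `v` wherever `v` is defined (identifying `1` with
true and `0` with false). -/
def BoolCompl {S : Type} (v : S → Option ℝ) (b : S → Bool) : Prop :=
  ∀ s, (v s = some 1 → b s = true) ∧ (v s = some 0 → b s = false)

lemma feval_indicator {S : Type} (a : S → Bool) (ψ : Fml S) (h : ConstZeroOne ψ) :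
    feval (fun t => if a t then (1:ℝ) else 0) ψ = if ceval a ψ then 1 else 0 := by
  induction ψ with
  | atom t => by_cases hat : a t = true <;> simp [feval, ceval, hat]
  | const c =>
      rcases h with h | h <;> subst h <;> norm_num [feval, ceval]
  | conj ψ₁ ψ₂ ih1 ih2 =>
      simp only [feval, ceval, ih1 h.1, ih2 h.2]
      rcases (ceval a ψ₁).eq_false_or_eq_true with h1 | h1 <;>
        rcases (ceval a ψ₂).eq_false_or_eq_true with h2 | h2 <;>
        simp [h1, h2]
  | disj ψ₁ ψ₂ ih1 ih2 =>
      simp only [feval, ceval, ih1 h.1, ih2 h.2]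
      rcases (ceval a ψ₁).eq_false_or_eq_true with h1 | h1 <;>
        rcases (ceval a ψ₂).eq_false_or_eq_true with h2 | h2 <;>
        simp [h1, h2]
  | neg ψ₁ ih =>
      simp only [feval, ceval, ih h]
      rcases (ceval a ψ₁).eq_false_or_eq_true with h1 | h1 <;> simp [h1]

/-- let `D` be the wADF over `[0,1]` with flat information
ordering whose acceptance conditions are given by fuzzy evaluation of formulas
`φ s` (with constants only `0` or `1`), and `D'` its classical version over
`{0,1}`. For a partial interpretation `v` with values in `{0,1,u}` and a
statement `s`: if `Γ_{D'}(v)(s) = u` (i.e. two classical completions of `v`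
evaluate `φ s` differently, so that the flat greatest lower bound is `u`), then
`Γ_D(v)(s) = u` (i.e. two fuzzy completions of `v` evaluate `φ s`
differently). -/
theorem classical_gamma_undefined_implies_fuzzy {S : Type} (φ : S → Fml S)
    (hc : ∀ s, ConstZeroOne (φ s))
    (v : S → Option ℝ)
    (hv : ∀ s, v s = none ∨ v s = some 0 ∨ v s = some 1) (s : S) :
    (∃ a a' : S → Bool, BoolCompl v a ∧ BoolCompl v a' ∧
        ceval a (φ s) ≠ ceval a' (φ s)) →
    (∃ w w' : S → ℝ, FuzzyCompl v w ∧ FuzzyCompl v w' ∧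
        feval w (φ s) ≠ feval w' (φ s)) := by
  rintro ⟨a, a', ha, ha', hne⟩
  have key : ∀ b : S → Bool, BoolCompl v b →
      FuzzyCompl v (fun t => if b t then (1:ℝ) else 0) := by
    intro b hb
    refine ⟨fun t => by dsimp only; split <;> norm_num, fun t y hy => ?_⟩
    rcases hv t with h | h | h
    · simp [h] at hy
    · have : y = 0 := by rw [h] at hy; exact (Option.some_inj.mp hy).symm
      simp [(hb t).2 h, this]
    · have : y = 1 := by rw [h] at hy; exact (Option.some_inj.mp hy).symm
      simp [(hb t).1 h, this]
  refine ⟨_, _, key a ha, key a' ha', ?_⟩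
  rw [feval_indicator a _ (hc s), feval_indicator a' _ (hc s)]
  cases h1 : ceval a (φ s) <;> cases h2 : ceval a' (φ s) <;>
    simp_all
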